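/- For every integer n ≥ 1, the following three identities hold: f_2(n) + f_3(n) = f_1(n), f_3(n) - f_2(n) = f_5(n), and 3·f_4(n) = 2·f_5(n) - f_3(n). -/

import Mathlib

open Finset

/-- `f₁(n) = Σ_{i=n}^{2n} C(3n+1, n+i+1)·C(i, n)`. -/
def f1 (n : ℕ) : ℕ :=
  ∑ i ∈ Finset.Icc n (2 * n), (3 * n + 1).choose (n + i + 1) * i.choose n

/-- `f₂(n) = Σ_{i=n}^{2n-1} C(3n, n+i+1)·C(i, n)`. -/
def f2 (n : ℕ) : ℕ :=
  ∑ i ∈ Finset.Icc n (2 * n - 1), (3 * n).choose (n + i + 1) * i.choose n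

/-- `f₃(n) = Σ_{i=n}^{2n} C(3n, n+i)·C(i, n)`. -/
def f3 (n : ℕ) : ℕ :=
  ∑ i ∈ Finset.Icc n (2 * n), (3 * n).choose (n + i) * i.choose n

/-- `f₄(n) = Σ_{i=n-1}^{2n-2} C(3n-1, n+i+1)·C(i, n-1)` for `n ≥ 1`. -/
def f4 (n : ℕ) : ℕ :=
  ∑ i ∈ Finset.Icc (n - 1) (2 * n - 2), (3 * n - 1).choose (n + i + 1) * i.choose (n - 1)

/-- `f₅(n) = Σ_{i=n-1}^{2n-1} C(3n, n+i+1)·C(i, n-1)` for `n ≥ 1`. -/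
def f5 (n : ℕ) : ℕ :=
  ∑ i ∈ Finset.Icc (n - 1) (2 * n - 1), (3 * n).choose (n + i + 1) * i.choose (n - 1)

lemma choose_int (N k : ℕ) : ((k:ℤ)+1) * (N.choose (k+1) : ℤ) = ((N:ℤ) - k) * (N.choose k : ℤ) := by
  rcases lt_or_ge k N with h | h
  · have h2 := congrArg (Nat.cast : ℕ → ℤ) (Nat.choose_succ_right_eq N k)
    push_cast [Nat.cast_sub h.le] at h2
    linarith
  · have h1 : N.choose (k+1) = 0 := Nat.choose_eq_zero_of_lt (by omega)
    rcases h.eq_or_lt with rfl | h'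
    · simp [h1]
    · rw [h1, Nat.choose_eq_zero_of_lt h']
      simp

lemma sum_shift (h : ℕ → ℤ) (a b : ℕ) :
    (∑ i ∈ Icc (a+1) (b+1), h (i-1)) = ∑ i ∈ Icc a b, h i := by
  rw [← map_add_right_Icc a b 1, Finset.sum_map]
  exact Finset.sum_congr rfl fun x _ => by simp [addRightEmbedding]

lemma sum_shift' (h : ℕ → ℤ) (a b : ℕ) :
    (∑ i ∈ Icc a b, h (i+1)) = ∑ i ∈ Icc (a+1) (b+1), h i := by
  rw [← map_add_right_Icc a b 1, Finset.sum_map]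
  exact Finset.sum_congr rfl fun x _ => by simp [addRightEmbedding]

lemma sum_trim_top (h : ℕ → ℤ) (a b : ℕ) (hab : a ≤ b + 1) (h0 : h (b+1) = 0) :
    ∑ i ∈ Icc a (b+1), h i = ∑ i ∈ Icc a b, h i := by
  rw [Finset.sum_Icc_succ_top hab, h0, add_zero]

lemma sum_trim_bot (h : ℕ → ℤ) (a b : ℕ) (hab : a ≤ b) (h0 : h a = 0) :
    ∑ i ∈ Icc a b, h i = ∑ i ∈ Icc (a+1) b, h i := by
  rw [Finset.Icc_eq_cons_Ioc hab, Finset.sum_cons, h0, zero_add, Finset.Icc_add_one_left_eq_Ioc]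

/-- pointwise telescoping certificate -/
lemma pt_cert (m i : ℕ) :
    ((m:ℤ)+1) * (((3*m+2).choose (m+i+2) : ℤ) * (i.choose (m+1) : ℤ)
        + ((3*m+2).choose (m+i) : ℤ) * (i.choose (m+1) : ℤ))
      + ((m:ℤ)+2) * ((3*m+3).choose (m+i+2) : ℤ) * ((i+1).choose (m+2) : ℤ)
    = ((m:ℤ)+1) * (4 * (((3*m+2).choose (m+i+1) : ℤ) * (i.choose (m+1) : ℤ)))
      + ((m:ℤ)+2) * ((3*m+3).choose (m+i+1) : ℤ) * (i.choose (m+2) : ℤ) := by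
  have e1 := congrArg (Nat.cast : ℕ → ℤ) (Nat.add_one_mul_choose_eq i (m+1))
  push_cast at e1
  have e2 := choose_int i (m+1)
  have e5 := choose_int (3*m+2) (m+i+1)
  have e6 := choose_int (3*m+2) (m+i)
  have p3 : ((3*m+3).choose (m+i+2) : ℤ)
      = ((3*m+2).choose (m+i+1) : ℤ) + ((3*m+2).choose (m+i+2) : ℤ) := by
    rw [show 3*m+3 = (3*m+2)+1 by ring, show m+i+2 = (m+i+1)+1 by ring, Nat.choose_succ_succ]
    push_cast; ring
  have p2 : ((3*m+3).choose (m+i+1) : ℤ)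
      = ((3*m+2).choose (m+i) : ℤ) + ((3*m+2).choose (m+i+1) : ℤ) := by
    rw [show 3*m+3 = (3*m+2)+1 by ring, show m+i+1 = (m+i)+1 by ring, Nat.choose_succ_succ]
    push_cast; ring
  rw [p3, p2]
  push_cast at e2 e5 e6
  linear_combination (-(((3*m+2).choose (m+i+1) : ℤ) + ((3*m+2).choose (m+i+2) : ℤ)))*e1
    - (((3*m+2).choose (m+i) : ℤ) + ((3*m+2).choose (m+i+1) : ℤ))*e2
    + ((i.choose (m+1) : ℤ))*e5 - ((i.choose (m+1) : ℤ))*e6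

theorem f_relations (n : ℕ) (hn : 1 ≤ n) :
    (f2 n : ℤ) + f3 n = f1 n ∧
    (f3 n : ℤ) - f2 n = f5 n ∧
    3 * (f4 n : ℤ) = 2 * f5 n - f3 n := by
  obtain ⟨m, rfl⟩ : ∃ m, n = m + 1 := ⟨n - 1, by omega⟩
  clear hn
  -- cast normal forms over s = Icc (m+1) (2m+2)
  have F1 : (f1 (m+1) : ℤ) =
      ∑ i ∈ Icc (m+1) (2*m+2), ((3*m+4).choose (m+i+2) : ℤ) * (i.choose (m+1)) := by
    rw [f1]; push_cast
    refine Finset.sum_congr (by rw [show 2*(m+1) = 2*m+2 by ring]) fun i _ => ?_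
    rw [show 3*(m+1)+1 = 3*m+4 by ring, show m+1+i+1 = m+i+2 by omega]
  have F3 : (f3 (m+1) : ℤ) =
      ∑ i ∈ Icc (m+1) (2*m+2), ((3*m+3).choose (m+i+1) : ℤ) * (i.choose (m+1)) := by
    rw [f3]; push_cast
    refine Finset.sum_congr (by rw [show 2*(m+1) = 2*m+2 by ring]) fun i _ => ?_
    rw [show 3*(m+1) = 3*m+3 by ring, show m+1+i = m+i+1 by omega]
  have F2 : (f2 (m+1) : ℤ) =
      ∑ i ∈ Icc (m+1) (2*m+2), ((3*m+3).choose (m+i+2) : ℤ) * (i.choose (m+1)) := by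
    rw [f2]; push_cast
    rw [show 2*(m+1)-1 = 2*m+1 by omega]
    calc (∑ i ∈ Icc (m+1) (2*m+1), ((3*(m+1)).choose (m+1+i+1) : ℤ) * (i.choose (m+1)))
        = ∑ i ∈ Icc (m+1) (2*m+1), ((3*m+3).choose (m+i+2) : ℤ) * (i.choose (m+1)) :=
          Finset.sum_congr rfl fun i _ => by
            rw [show 3*(m+1) = 3*m+3 by ring, show m+1+i+1 = m+i+2 by omega]
      _ = ∑ i ∈ Icc (m+1) (2*m+2), ((3*m+3).choose (m+i+2) : ℤ) * (i.choose (m+1)) :=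
          (sum_trim_top _ (m+1) (2*m+1) (by omega)
            (by simp [Nat.choose_eq_zero_of_lt (by omega : 3*m+3 < m+(2*m+2)+2)])).symm
  have F4 : (f4 (m+1) : ℤ) =
      ∑ i ∈ Icc (m+1) (2*m+2), ((3*m+2).choose (m+i+1) : ℤ) * ((i-1).choose m) := by
    rw [f4]; push_cast
    rw [show 2*(m+1)-2 = 2*m by omega]
    calc (∑ i ∈ Icc m (2*m), ((3*(m+1)-1).choose (m+1+i+1) : ℤ) * (i.choose m))
        = ∑ i ∈ Icc m (2*m), ((3*m+2).choose (m+i+2) : ℤ) * (i.choose m) :=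
          Finset.sum_congr rfl fun i _ => by
            rw [show 3*(m+1)-1 = 3*m+2 by omega, show m+1+i+1 = m+i+2 by omega]
      _ = ∑ i ∈ Icc (m+1) (2*m+1), ((3*m+2).choose (m+(i-1)+2) : ℤ) * ((i-1).choose m) :=
          (sum_shift (fun j => ((3*m+2).choose (m+j+2) : ℤ) * (j.choose m)) m (2*m)).symm
      _ = ∑ i ∈ Icc (m+1) (2*m+1), ((3*m+2).choose (m+i+1) : ℤ) * ((i-1).choose m) :=
          Finset.sum_congr rfl fun i hi => by
            simp only [mem_Icc] at hi
            rw [show m+(i-1)+2 = m+i+1 by omega]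
      _ = ∑ i ∈ Icc (m+1) (2*m+2), ((3*m+2).choose (m+i+1) : ℤ) * ((i-1).choose m) :=
          (sum_trim_top _ (m+1) (2*m+1) (by omega)
            (by simp [Nat.choose_eq_zero_of_lt (by omega : 3*m+2 < m+(2*m+2)+1)])).symm
  have F5 : (f5 (m+1) : ℤ) =
      ∑ i ∈ Icc (m+1) (2*m+2), ((3*m+3).choose (m+i+1) : ℤ) * ((i-1).choose m) := by
    rw [f5]; push_cast
    rw [show 2*(m+1)-1 = 2*m+1 by omega]
    calc (∑ i ∈ Icc m (2*m+1), ((3*(m+1)).choose (m+1+i+1) : ℤ) * (i.choose m))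
        = ∑ i ∈ Icc m (2*m+1), ((3*m+3).choose (m+i+2) : ℤ) * (i.choose m) :=
          Finset.sum_congr rfl fun i _ => by
            rw [show 3*(m+1) = 3*m+3 by ring, show m+1+i+1 = m+i+2 by omega]
      _ = ∑ i ∈ Icc (m+1) (2*m+2), ((3*m+3).choose (m+(i-1)+2) : ℤ) * ((i-1).choose m) :=
          (sum_shift (fun j => ((3*m+3).choose (m+j+2) : ℤ) * (j.choose m)) m (2*m+1)).symm
      _ = ∑ i ∈ Icc (m+1) (2*m+2), ((3*m+3).choose (m+i+1) : ℤ) * ((i-1).choose m) :=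
          Finset.sum_congr rfl fun i hi => by
            simp only [mem_Icc] at hi
            rw [show m+(i-1)+2 = m+i+1 by omega]
  -- the three basic sums
  set Az := ∑ i ∈ Icc (m+1) (2*m+2), ((3*m+2).choose (m+i) : ℤ) * (i.choose (m+1)) with hAz
  set Dz := ∑ i ∈ Icc (m+1) (2*m+2), ((3*m+2).choose (m+i+1) : ℤ) * (i.choose (m+1)) with hDz
  set Ez := ∑ i ∈ Icc (m+1) (2*m+2), ((3*m+2).choose (m+i+2) : ℤ) * (i.choose (m+1)) with hEz
  -- Pascal splits
  have hf3 : (f3 (m+1) : ℤ) = Az + Dz := by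
    rw [F3, hAz, hDz, ← Finset.sum_add_distrib]
    refine Finset.sum_congr rfl fun i _ => ?_
    rw [show 3*m+3 = (3*m+2)+1 by ring, show m+i+1 = (m+i)+1 by ring, Nat.choose_succ_succ]
    push_cast; ring
  have hf2 : (f2 (m+1) : ℤ) = Dz + Ez := by
    rw [F2, hDz, hEz, ← Finset.sum_add_distrib]
    refine Finset.sum_congr rfl fun i _ => ?_
    rw [show 3*m+3 = (3*m+2)+1 by ring, show m+i+2 = (m+i+1)+1 by ring, Nat.choose_succ_succ]
    push_cast; ring
  have hf1 : (f1 (m+1) : ℤ) = (f2 (m+1) : ℤ) + (f3 (m+1) : ℤ) := by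
    rw [F1, F2, F3, ← Finset.sum_add_distrib]
    refine Finset.sum_congr rfl fun i _ => ?_
    rw [show 3*m+4 = (3*m+3)+1 by ring, show m+i+2 = (m+i+1)+1 by ring, Nat.choose_succ_succ]
    push_cast; ring
  -- shift identities : sums with (i-1) against choose (m+1)
  have S1 : (∑ i ∈ Icc (m+1) (2*m+2), ((3*m+2).choose (m+i) : ℤ) * ((i-1).choose (m+1))) = Dz := by
    calc (∑ i ∈ Icc (m+1) (2*m+2), ((3*m+2).choose (m+i) : ℤ) * ((i-1).choose (m+1)))
        = ∑ i ∈ Icc (m+1) (2*m+2), ((3*m+2).choose (m+(i-1)+1) : ℤ) * ((i-1).choose (m+1)) :=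
          Finset.sum_congr rfl fun i hi => by
            simp only [mem_Icc] at hi
            rw [show m+(i-1)+1 = m+i by omega]
      _ = ∑ i ∈ Icc m (2*m+1), ((3*m+2).choose (m+i+1) : ℤ) * (i.choose (m+1)) :=
          sum_shift (fun j => ((3*m+2).choose (m+j+1) : ℤ) * (j.choose (m+1))) m (2*m+1)
      _ = ∑ i ∈ Icc (m+1) (2*m+1), ((3*m+2).choose (m+i+1) : ℤ) * (i.choose (m+1)) :=
          sum_trim_bot _ m (2*m+1) (by omega)
            (by simp [Nat.choose_eq_zero_of_lt (by omega : m < m+1)])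
      _ = Dz := by
          rw [hDz]
          exact (sum_trim_top _ (m+1) (2*m+1) (by omega)
            (by simp [Nat.choose_eq_zero_of_lt (by omega : 3*m+2 < m+(2*m+2)+1)])).symm
  have S2 : (∑ i ∈ Icc (m+1) (2*m+2), ((3*m+2).choose (m+i+1) : ℤ) * ((i-1).choose (m+1))) = Ez := by
    calc (∑ i ∈ Icc (m+1) (2*m+2), ((3*m+2).choose (m+i+1) : ℤ) * ((i-1).choose (m+1)))
        = ∑ i ∈ Icc (m+1) (2*m+2), ((3*m+2).choose (m+(i-1)+2) : ℤ) * ((i-1).choose (m+1)) :=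
          Finset.sum_congr rfl fun i hi => by
            simp only [mem_Icc] at hi
            rw [show m+(i-1)+2 = m+i+1 by omega]
      _ = ∑ i ∈ Icc m (2*m+1), ((3*m+2).choose (m+i+2) : ℤ) * (i.choose (m+1)) :=
          sum_shift (fun j => ((3*m+2).choose (m+j+2) : ℤ) * (j.choose (m+1))) m (2*m+1)
      _ = ∑ i ∈ Icc (m+1) (2*m+1), ((3*m+2).choose (m+i+2) : ℤ) * (i.choose (m+1)) :=
          sum_trim_bot _ m (2*m+1) (by omega)
            (by simp [Nat.choose_eq_zero_of_lt (by omega : m < m+1)])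
      _ = Ez := by
          rw [hEz]
          exact (sum_trim_top _ (m+1) (2*m+1) (by omega)
            (by simp [Nat.choose_eq_zero_of_lt (by omega : 3*m+2 < m+(2*m+2)+2)])).symm
  -- B = B' + B'' decompositions
  have hf4' : (f4 (m+1) : ℤ) + Ez = Dz := by
    rw [F4, ← S2, hDz, ← Finset.sum_add_distrib]
    refine Finset.sum_congr rfl fun i hi => ?_
    simp only [mem_Icc] at hi
    obtain ⟨j, rfl⟩ : ∃ j, i = j + 1 := ⟨i - 1, by omega⟩
    simp only [Nat.add_sub_cancel]
    rw [show (j+1).choose (m+1) = j.choose m + j.choose (m+1) from Nat.choose_succ_succ j m]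
    push_cast; ring
  have hf5' : (f5 (m+1) : ℤ) =
      (∑ i ∈ Icc (m+1) (2*m+2), ((3*m+2).choose (m+i) : ℤ) * ((i-1).choose m)) + (f4 (m+1) : ℤ) := by
    rw [F5, F4, ← Finset.sum_add_distrib]
    refine Finset.sum_congr rfl fun i _ => ?_
    rw [show 3*m+3 = (3*m+2)+1 by ring, show m+i+1 = (m+i)+1 by ring, Nat.choose_succ_succ]
    push_cast; ring
  have hAsplit : Az =
      (∑ i ∈ Icc (m+1) (2*m+2), ((3*m+2).choose (m+i) : ℤ) * ((i-1).choose m)) + Dz := by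
    rw [← S1, hAz, ← Finset.sum_add_distrib]
    refine Finset.sum_congr rfl fun i hi => ?_
    simp only [mem_Icc] at hi
    obtain ⟨j, rfl⟩ : ∃ j, i = j + 1 := ⟨i - 1, by omega⟩
    simp only [Nat.add_sub_cancel]
    rw [show (j+1).choose (m+1) = j.choose m + j.choose (m+1) from Nat.choose_succ_succ j m]
    push_cast; ring
  -- telescoping identity : Ez + Az = 4 * Dz
  have L5 : Ez + Az = 4 * Dz := by
    set g : ℕ → ℤ := fun j => ((m:ℤ)+2) * ((3*m+3).choose (m+j+1) : ℤ) * (j.choose (m+2) : ℤ) with hg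
    have tele : ∑ i ∈ Icc (m+1) (2*m+2),
          (((m:ℤ)+1) * (((3*m+2).choose (m+i+2) : ℤ) * (i.choose (m+1))
            + ((3*m+2).choose (m+i) : ℤ) * (i.choose (m+1))) + g (i+1))
        = ∑ i ∈ Icc (m+1) (2*m+2),
          (((m:ℤ)+1) * (4 * (((3*m+2).choose (m+i+1) : ℤ) * (i.choose (m+1)))) + g i) := by
      refine Finset.sum_congr rfl fun i _ => ?_
      have := pt_cert m i
      rw [hg]
      simp only []
      rw [show m+(i+1)+1 = m+i+2 by omega]
      linarith [pt_cert m i]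
    have hgsum : (∑ i ∈ Icc (m+1) (2*m+2), g (i+1)) = ∑ i ∈ Icc (m+1) (2*m+2), g i := by
      rw [sum_shift' g (m+1) (2*m+2)]
      rw [sum_trim_top g (m+2) (2*m+2) (by omega)
        (by simp [hg, Nat.choose_eq_zero_of_lt (by omega : 3*m+3 < m+(2*m+3)+1)])]
      exact (sum_trim_bot g (m+1) (2*m+2) (by omega)
        (by simp [hg, Nat.choose_eq_zero_of_lt (by omega : m+1 < m+2)])).symm
    rw [Finset.sum_add_distrib, Finset.sum_add_distrib, hgsum] at tele
    have tele2 := add_right_cancel tele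
    rw [← Finset.mul_sum, ← Finset.mul_sum, Finset.sum_add_distrib] at tele2
    have hcancel := mul_left_cancel₀ (show ((m:ℤ)+1) ≠ 0 by positivity) tele2
    rw [← Finset.mul_sum] at hcancel
    rw [hEz, hAz, hDz]
    convert hcancel using 2
  refine ⟨by linarith [hf1], by linarith [hf2, hf3, hf5', hAsplit, hf4', L5],
    by linarith [hf2, hf3, hf5', hAsplit, hf4', L5]⟩
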